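/- Assume moreover f' > 0 (hence g' < 0) on I. Set E = ⟨z_u,z_u⟩, F = ⟨z_u,z_v⟩, G = ⟨z_v,z_v⟩, W = √(EG − F²), c¹₁₁ = ⟨z_uu,n₁⟩, c²₁₁ = ⟨z_uu,n₂⟩, c¹₁₂ = ⟨z_uv,n₁⟩, c²₁₂ = ⟨z_uv,n₂⟩, c¹₂₂ = ⟨z_vv,n₁⟩, c²₂₂ = ⟨z_vv,n₂⟩, and define L = (2/W)(c¹₁₁c²₁₂ − c²₁₁c¹₁₂), M = (1/W)(c¹₁₁c²₂₂ − c²₁₁c¹₂₂), N = (2/W)(c¹₂₂c²₂₂·0 + c¹₁₂c²₂₂ − c²₁₂c¹₂₂). Then at every (u,v) ∈ I × J: L = 0, N = 0, M² = κ_m(u)²κ̄(v)²(−2f'g')(φ̇² + φ²), and consequently the invariants satisfy k := (LN − M²)/(EG − F²) = −κ_m(u)²κ̄(v)²/f(u)² and ϰ := (EN + GL − 2FM)/(2(EG − F²)) = 0; in particular the surface has flat normal connection. -/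

import Mathlib

namespace MeridianParabolic

noncomputable section

/-- The Minkowski inner product of signature (3,1) on `ℝ⁴`:
`⟨x,y⟩ = x₁y₁ + x₂y₂ + x₃y₃ − x₄y₄`. -/
def mink (x y : Fin 4 → ℝ) : ℝ := x 0 * y 0 + x 1 * y 1 + x 2 * y 2 - x 3 * y 3

/-- The first standard basis vector `e₁`. -/
def e1 : Fin 4 → ℝ := ![1, 0, 0, 0]

/-- The second standard basis vector `e₂`. -/
def e2 : Fin 4 → ℝ := ![0, 1, 0, 0]

/-- The lightlike vector `ξ₁ = (e₃ + e₄)/√2`. -/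
def xi1 : Fin 4 → ℝ := ![0, 0, 1 / Real.sqrt 2, 1 / Real.sqrt 2]

/-- The lightlike vector `ξ₂ = (−e₃ + e₄)/√2`. -/
def xi2 : Fin 4 → ℝ := ![0, 0, -(1 / Real.sqrt 2), 1 / Real.sqrt 2]

/-- The meridian surface of parabolic type
`z(u,v) = fφ cos v · e₁ + fφ sin v · e₂ + (fφ²/2 + g) ξ₁ + f ξ₂`. -/
def z (f g φ : ℝ → ℝ) (u v : ℝ) : Fin 4 → ℝ :=
  (f u * φ v * Real.cos v) • e1 + (f u * φ v * Real.sin v) • e2 +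
    (f u * (φ v) ^ 2 / 2 + g u) • xi1 + f u • xi2

/-- The partial derivative `z_u`. -/
def zu (f g φ : ℝ → ℝ) (u v : ℝ) : Fin 4 → ℝ := deriv (fun t => z f g φ t v) u

/-- The partial derivative `z_v`. -/
def zv (f g φ : ℝ → ℝ) (u v : ℝ) : Fin 4 → ℝ := deriv (fun t => z f g φ u t) v

/-- The second partial derivative `z_uu`. -/
def zuu (f g φ : ℝ → ℝ) (u v : ℝ) : Fin 4 → ℝ := deriv (fun t => zu f g φ t v) u

/-- The second partial derivative `z_uv`. -/
def zuv (f g φ : ℝ → ℝ) (u v : ℝ) : Fin 4 → ℝ := deriv (fun t => zu f g φ u t) v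

/-- The second partial derivative `z_vv`. -/
def zvv (f g φ : ℝ → ℝ) (u v : ℝ) : Fin 4 → ℝ := deriv (fun t => zv f g φ u t) v

/-- The normal field `n₁ = ((φ̇ sin v + φ cos v) e₁ + (−φ̇ cos v + φ sin v) e₂ + φ² ξ₁)/√(φ̇² + φ²)`. -/
def n1 (φ : ℝ → ℝ) (v : ℝ) : Fin 4 → ℝ :=
  (Real.sqrt ((deriv φ v) ^ 2 + (φ v) ^ 2))⁻¹ •
    ((deriv φ v * Real.sin v + φ v * Real.cos v) • e1 +
      (-(deriv φ v) * Real.cos v + φ v * Real.sin v) • e2 + (φ v) ^ 2 • xi1)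

/-- The normal field `n₂ = √(−f'/(2g')) (φ cos v e₁ + φ sin v e₂ + ((f'φ² − 2g')/(2f')) ξ₁ + ξ₂)`. -/
def n2 (f g φ : ℝ → ℝ) (u v : ℝ) : Fin 4 → ℝ :=
  Real.sqrt (-(deriv f u) / (2 * deriv g u)) •
    ((φ v * Real.cos v) • e1 + (φ v * Real.sin v) • e2 +
      ((deriv f u * (φ v) ^ 2 - 2 * deriv g u) / (2 * deriv f u)) • xi1 + xi2)

/-- The curvature `κ_m(u) = (f'g'' − g'f'')/(−2f'g')^{3/2}` of the meridians. -/
def kappam (f g : ℝ → ℝ) (u : ℝ) : ℝ :=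
  (deriv f u * deriv (deriv g) u - deriv g u * deriv (deriv f) u) /
    (-2 * deriv f u * deriv g u) ^ ((3 : ℝ) / 2)

/-- The curvature `κ̄(v) = (φφ̈ − 2φ̇² − φ²)/(φ̇² + φ²)^{3/2}`. -/
def kappabar (φ : ℝ → ℝ) (v : ℝ) : ℝ :=
  (φ v * deriv (deriv φ) v - 2 * (deriv φ v) ^ 2 - (φ v) ^ 2) /
    ((deriv φ v) ^ 2 + (φ v) ^ 2) ^ ((3 : ℝ) / 2)

/-- The coefficient `E = ⟨z_u,z_u⟩` of the first fundamental form. -/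
def Ecoef (f g φ : ℝ → ℝ) (u v : ℝ) : ℝ := mink (zu f g φ u v) (zu f g φ u v)

/-- The coefficient `F = ⟨z_u,z_v⟩` of the first fundamental form. -/
def Fcoef (f g φ : ℝ → ℝ) (u v : ℝ) : ℝ := mink (zu f g φ u v) (zv f g φ u v)

/-- The coefficient `G = ⟨z_v,z_v⟩` of the first fundamental form. -/
def Gcoef (f g φ : ℝ → ℝ) (u v : ℝ) : ℝ := mink (zv f g φ u v) (zv f g φ u v)

/-- `W = √(EG − F²)`. -/
def Wcoef (f g φ : ℝ → ℝ) (u v : ℝ) : ℝ :=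
  Real.sqrt (Ecoef f g φ u v * Gcoef f g φ u v - (Fcoef f g φ u v) ^ 2)

/-- The coefficient `L = (2/W)(c¹₁₁c²₁₂ − c²₁₁c¹₁₂)` of the second fundamental form. -/
def Lcoef (f g φ : ℝ → ℝ) (u v : ℝ) : ℝ :=
  2 / Wcoef f g φ u v *
    (mink (zuu f g φ u v) (n1 φ v) * mink (zuv f g φ u v) (n2 f g φ u v) -
      mink (zuu f g φ u v) (n2 f g φ u v) * mink (zuv f g φ u v) (n1 φ v))

/-- The coefficient `M = (1/W)(c¹₁₁c²₂₂ − c²₁₁c¹₂₂)` of the second fundamental form. -/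
def Mcoef (f g φ : ℝ → ℝ) (u v : ℝ) : ℝ :=
  1 / Wcoef f g φ u v *
    (mink (zuu f g φ u v) (n1 φ v) * mink (zvv f g φ u v) (n2 f g φ u v) -
      mink (zuu f g φ u v) (n2 f g φ u v) * mink (zvv f g φ u v) (n1 φ v))

/-- The coefficient `N = (2/W)(c¹₁₂c²₂₂ − c²₁₂c¹₂₂)` of the second fundamental form. -/
def Ncoef (f g φ : ℝ → ℝ) (u v : ℝ) : ℝ :=
  2 / Wcoef f g φ u v *
    (mink (zvv f g φ u v) (n1 φ v) * mink (zvv f g φ u v) (n2 f g φ u v) * 0 +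
      mink (zuv f g φ u v) (n1 φ v) * mink (zvv f g φ u v) (n2 f g φ u v) -
      mink (zuv f g φ u v) (n2 f g φ u v) * mink (zvv f g φ u v) (n1 φ v))

set_option maxHeartbeats 1000000

lemma Msq_lemma (f1 f2 g1 g2 f0 p0 p1 p2 r Q W A B km kb : ℝ)
    (hf1 : f1 ≠ 0) (hg1 : g1 ≠ 0) (hf0 : f0 ≠ 0)
    (hqne : p1 ^ 2 + p0 ^ 2 ≠ 0)
    (hr2 : r ^ 2 = -f1 / (2 * g1)) (hQ2 : Q ^ 2 = p1 ^ 2 + p0 ^ 2)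
    (hW2 : W ^ 2 = -2 * f1 * g1 * (f0 ^ 2 * (p1 ^ 2 + p0 ^ 2)))
    (hA2 : A ^ 2 = (-2 * f1 * g1) ^ 3) (hB2 : B ^ 2 = (p1 ^ 2 + p0 ^ 2) ^ 3)
    (hkm : km = (f1 * g2 - g1 * f2) / A) (hkb : kb = (p0 * p2 - 2 * p1 ^ 2 - p0 ^ 2) / B) :
    (1 / W * (0 * (-(r * f0 * (p1 ^ 2 + p0 ^ 2))) -
        r * ((f2 * g1 - f1 * g2) / f1) * (f0 * (p0 * p2 - 2 * p1 ^ 2 - p0 ^ 2) * Q⁻¹))) ^ 2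
      = km ^ 2 * kb ^ 2 * (-2 * f1 * g1) * (p1 ^ 2 + p0 ^ 2) := by
  subst hkm hkb
  have step : (1 / W * (0 * (-(r * f0 * (p1 ^ 2 + p0 ^ 2))) -
        r * ((f2 * g1 - f1 * g2) / f1) * (f0 * (p0 * p2 - 2 * p1 ^ 2 - p0 ^ 2) * Q⁻¹))) ^ 2
      = r ^ 2 * (f2 * g1 - f1 * g2) ^ 2 * f0 ^ 2 * (p0 * p2 - 2 * p1 ^ 2 - p0 ^ 2) ^ 2 *
          ((Q ^ 2)⁻¹ * (W ^ 2)⁻¹) / f1 ^ 2 := by ring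
  rw [step, hr2, hQ2, hW2, div_pow, div_pow, hA2, hB2]
  generalize p1 ^ 2 + p0 ^ 2 = q at hqne ⊢
  field_simp
  ring

lemma mink_combo (a b c d a' b' c' d' : ℝ) :
    mink (a • e1 + b • e2 + c • xi1 + d • xi2) (a' • e1 + b' • e2 + c' • xi1 + d' • xi2)
      = a * a' + b * b' - (c * d' + d * c') := by
  have h2 : Real.sqrt 2 ≠ 0 := by positivity
  have hs : Real.sqrt 2 ^ 2 = 2 := Real.sq_sqrt (by norm_num)
  simp [mink, e1, e2, xi1, xi2]
  field_simp
  rw [hs]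
  ring


lemma n1_eq (φ : ℝ → ℝ) (v : ℝ) :
    n1 φ v = ((Real.sqrt ((deriv φ v) ^ 2 + (φ v) ^ 2))⁻¹ * (deriv φ v * Real.sin v + φ v * Real.cos v)) • e1 +
      ((Real.sqrt ((deriv φ v) ^ 2 + (φ v) ^ 2))⁻¹ * (-(deriv φ v) * Real.cos v + φ v * Real.sin v)) • e2 +
      ((Real.sqrt ((deriv φ v) ^ 2 + (φ v) ^ 2))⁻¹ * (φ v) ^ 2) • xi1 + (0 : ℝ) • xi2 := by
  unfold n1; module

lemma n2_eq (f g φ : ℝ → ℝ) (u v : ℝ) :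
    n2 f g φ u v = (Real.sqrt (-(deriv f u) / (2 * deriv g u)) * (φ v * Real.cos v)) • e1 +
      (Real.sqrt (-(deriv f u) / (2 * deriv g u)) * (φ v * Real.sin v)) • e2 +
      (Real.sqrt (-(deriv f u) / (2 * deriv g u)) *
        ((deriv f u * (φ v) ^ 2 - 2 * deriv g u) / (2 * deriv f u))) • xi1 +
      (Real.sqrt (-(deriv f u) / (2 * deriv g u)) * 1) • xi2 := by
  unfold n2; module

lemma z_hasDerivAt_u (f g φ : ℝ → ℝ) (u v : ℝ)
    (hf : DifferentiableAt ℝ f u) (hg : DifferentiableAt ℝ g u) :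
    HasDerivAt (fun t => z f g φ t v) (z (deriv f) (deriv g) φ u v) u := by
  unfold z
  have h1 : HasDerivAt (fun t => f t * φ v * Real.cos v) (deriv f u * φ v * Real.cos v) u := by
    simpa [mul_assoc] using hf.hasDerivAt.mul_const (φ v * Real.cos v)
  have h2 : HasDerivAt (fun t => f t * φ v * Real.sin v) (deriv f u * φ v * Real.sin v) u := by
    simpa [mul_assoc] using hf.hasDerivAt.mul_const (φ v * Real.sin v)
  have h3 : HasDerivAt (fun t => f t * (φ v) ^ 2 / 2 + g t)
      (deriv f u * (φ v) ^ 2 / 2 + deriv g u) u :=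
    ((hf.hasDerivAt.mul_const ((φ v) ^ 2)).div_const 2).add hg.hasDerivAt
  exact (((h1.smul_const e1).add (h2.smul_const e2)).add (h3.smul_const xi1)).add
    (hf.hasDerivAt.smul_const xi2)

lemma zu_eq (f g φ : ℝ → ℝ) (u v : ℝ)
    (hf : DifferentiableAt ℝ f u) (hg : DifferentiableAt ℝ g u) :
    zu f g φ u v = z (deriv f) (deriv g) φ u v :=
  (z_hasDerivAt_u f g φ u v hf hg).deriv

lemma z_hasDerivAt_v (f g φ : ℝ → ℝ) (u v : ℝ) (hφ : DifferentiableAt ℝ φ v) :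
    HasDerivAt (fun t => z f g φ u t)
      ((f u * (deriv φ v * Real.cos v - φ v * Real.sin v)) • e1 +
        (f u * (deriv φ v * Real.sin v + φ v * Real.cos v)) • e2 +
        (f u * (φ v * deriv φ v)) • xi1 + (0 : ℝ) • xi2) v := by
  unfold z
  have h1 : HasDerivAt (fun t => f u * φ t * Real.cos t)
      (f u * (deriv φ v * Real.cos v - φ v * Real.sin v)) v := by
    have h := (hφ.hasDerivAt.mul (Real.hasDerivAt_cos v)).const_mul (f u)
    convert h using 1 <;> first | rfl | (funext t; (try simp only [Pi.mul_apply, Pi.pow_apply, Pi.add_apply, Pi.sub_apply]); ring) | ring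
  have h2 : HasDerivAt (fun t => f u * φ t * Real.sin t)
      (f u * (deriv φ v * Real.sin v + φ v * Real.cos v)) v := by
    have h := (hφ.hasDerivAt.mul (Real.hasDerivAt_sin v)).const_mul (f u)
    convert h using 1 <;> first | rfl | (funext t; (try simp only [Pi.mul_apply, Pi.pow_apply, Pi.add_apply, Pi.sub_apply]); ring) | ring
  have h3 : HasDerivAt (fun t => f u * φ t ^ 2 / 2 + g u)
      (f u * (φ v * deriv φ v)) v := by
    have h := ((((hφ.hasDerivAt.pow 2).const_mul (f u)).div_const 2).add_const (g u))
    convert h using 1 <;> first | rfl | (funext t; (try simp only [Pi.mul_apply, Pi.pow_apply, Pi.add_apply, Pi.sub_apply]); push_cast; ring) | (push_cast; ring)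
  have h4 : HasDerivAt (fun _ : ℝ => f u • xi2) ((0:ℝ) • xi2) v := by
    simpa using hasDerivAt_const v (f u • xi2)
  exact (((h1.smul_const e1).add (h2.smul_const e2)).add (h3.smul_const xi1)).add h4

lemma zv_eq (f g φ : ℝ → ℝ) (u v : ℝ) (hφ : DifferentiableAt ℝ φ v) :
    zv f g φ u v = (f u * (deriv φ v * Real.cos v - φ v * Real.sin v)) • e1 +
        (f u * (deriv φ v * Real.sin v + φ v * Real.cos v)) • e2 +
        (f u * (φ v * deriv φ v)) • xi1 + (0 : ℝ) • xi2 :=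
  (z_hasDerivAt_v f g φ u v hφ).deriv

lemma zvv_formula (f g φ : ℝ → ℝ) (J : Set ℝ) (hJ : IsOpen J) (u v : ℝ) (hv : v ∈ J)
    (hφa : ∀ t ∈ J, DifferentiableAt ℝ φ t) (hφ2 : DifferentiableAt ℝ (deriv φ) v) :
    zvv f g φ u v =
      (f u * (deriv (deriv φ) v * Real.cos v - 2 * deriv φ v * Real.sin v - φ v * Real.cos v)) • e1 +
      (f u * (deriv (deriv φ) v * Real.sin v + 2 * deriv φ v * Real.cos v - φ v * Real.sin v)) • e2 +
      (f u * ((deriv φ v) ^ 2 + φ v * deriv (deriv φ) v)) • xi1 + (0 : ℝ) • xi2 := by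
  have hφ1 := hφa v hv
  have hev : (fun t => zv f g φ u t) =ᶠ[nhds v] (fun t =>
      (f u * (deriv φ t * Real.cos t - φ t * Real.sin t)) • e1 +
      (f u * (deriv φ t * Real.sin t + φ t * Real.cos t)) • e2 +
      (f u * (φ t * deriv φ t)) • xi1 + (0 : ℝ) • xi2) := by
    filter_upwards [hJ.mem_nhds hv] with t ht
    exact zv_eq f g φ u t (hφa t ht)
  have h1 : HasDerivAt (fun t => f u * (deriv φ t * Real.cos t - φ t * Real.sin t))
      (f u * (deriv (deriv φ) v * Real.cos v - 2 * deriv φ v * Real.sin v - φ v * Real.cos v)) v := by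
    have h := ((hφ2.hasDerivAt.mul (Real.hasDerivAt_cos v)).sub
      (hφ1.hasDerivAt.mul (Real.hasDerivAt_sin v))).const_mul (f u)
    convert h using 1 <;> first | rfl | (funext t; (try simp only [Pi.mul_apply, Pi.pow_apply, Pi.add_apply, Pi.sub_apply]); ring) | ring
  have h2 : HasDerivAt (fun t => f u * (deriv φ t * Real.sin t + φ t * Real.cos t))
      (f u * (deriv (deriv φ) v * Real.sin v + 2 * deriv φ v * Real.cos v - φ v * Real.sin v)) v := by
    have h := ((hφ2.hasDerivAt.mul (Real.hasDerivAt_sin v)).add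
      (hφ1.hasDerivAt.mul (Real.hasDerivAt_cos v))).const_mul (f u)
    convert h using 1 <;> first | rfl | (funext t; (try simp only [Pi.mul_apply, Pi.pow_apply, Pi.add_apply, Pi.sub_apply]); ring) | ring
  have h3 : HasDerivAt (fun t => f u * (φ t * deriv φ t))
      (f u * ((deriv φ v) ^ 2 + φ v * deriv (deriv φ) v)) v := by
    have h := (hφ1.hasDerivAt.mul hφ2.hasDerivAt).const_mul (f u)
    convert h using 1 <;> first | rfl | (funext t; (try simp only [Pi.mul_apply, Pi.pow_apply, Pi.add_apply, Pi.sub_apply]); ring) | ring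
  have h4 : HasDerivAt (fun _ : ℝ => (0:ℝ) • xi2) ((0:ℝ) • xi2) v := by
    simpa using hasDerivAt_const v ((0:ℝ) • xi2)
  have hd := (((h1.smul_const e1).add (h2.smul_const e2)).add (h3.smul_const xi1)).add h4
  calc zvv f g φ u v = deriv (fun t => zv f g φ u t) v := rfl
    _ = _ := by rw [hev.deriv_eq]; exact hd.deriv

/-- assuming `f' > 0`, for the meridian surface of parabolic type
`L = 0`, `N = 0`, `M² = κ_m²κ̄²(−2f'g')(φ̇² + φ²)`, and the invariants satisfy
`k = (LN − M²)/(EG − F²) = −κ_m²κ̄²/f²` and `ϰ = (EN + GL − 2FM)/(2(EG − F²)) = 0`;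
in particular the surface has flat normal connection. -/
theorem statement5
    (I J : Set ℝ) (hIopen : IsOpen I) (hIconn : IsPreconnected I)
    (hJopen : IsOpen J) (hJconn : IsPreconnected J)
    (f g φ : ℝ → ℝ)
    (hf : ContDiffOn ℝ (⊤ : ℕ∞) f I) (hg : ContDiffOn ℝ (⊤ : ℕ∞) g I)
    (hφ : ContDiffOn ℝ (⊤ : ℕ∞) φ J)
    (hfpos : ∀ u ∈ I, 0 < f u)
    (hfg : ∀ u ∈ I, 0 < -(deriv f u * deriv g u))
    (hφpos : ∀ v ∈ J, 0 < (deriv φ v) ^ 2 + (φ v) ^ 2)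
    (hfd : ∀ u ∈ I, 0 < deriv f u) (hgd : ∀ u ∈ I, deriv g u < 0) :
    ∀ u ∈ I, ∀ v ∈ J,
      Lcoef f g φ u v = 0 ∧
      Ncoef f g φ u v = 0 ∧
      (Mcoef f g φ u v) ^ 2 =
        (kappam f g u) ^ 2 * (kappabar φ v) ^ 2 * (-2 * deriv f u * deriv g u) *
          ((deriv φ v) ^ 2 + (φ v) ^ 2) ∧
      (Lcoef f g φ u v * Ncoef f g φ u v - (Mcoef f g φ u v) ^ 2) /
          (Ecoef f g φ u v * Gcoef f g φ u v - (Fcoef f g φ u v) ^ 2) =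
        -((kappam f g u) ^ 2 * (kappabar φ v) ^ 2) / f u ^ 2 ∧
      (Ecoef f g φ u v * Ncoef f g φ u v + Gcoef f g φ u v * Lcoef f g φ u v -
            2 * Fcoef f g φ u v * Mcoef f g φ u v) /
          (2 * (Ecoef f g φ u v * Gcoef f g φ u v - (Fcoef f g φ u v) ^ 2)) = 0 := by
  intro u hu v hv
  -- differentiability facts
  have hfa : ∀ t ∈ I, DifferentiableAt ℝ f t := fun t ht =>
    (hf.contDiffAt (hIopen.mem_nhds ht)).differentiableAt (by simp)
  have hga : ∀ t ∈ I, DifferentiableAt ℝ g t := fun t ht =>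
    (hg.contDiffAt (hIopen.mem_nhds ht)).differentiableAt (by simp)
  have hφa : ∀ t ∈ J, DifferentiableAt ℝ φ t := fun t ht =>
    (hφ.contDiffAt (hJopen.mem_nhds ht)).differentiableAt (by simp)
  have hf' : ContDiffOn ℝ (⊤ : ℕ∞) (deriv f) I := hf.deriv_of_isOpen hIopen (by exact_mod_cast le_top)
  have hg' : ContDiffOn ℝ (⊤ : ℕ∞) (deriv g) I := hg.deriv_of_isOpen hIopen (by exact_mod_cast le_top)
  have hφ' : ContDiffOn ℝ (⊤ : ℕ∞) (deriv φ) J := hφ.deriv_of_isOpen hJopen (by exact_mod_cast le_top)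
  have hf2a : DifferentiableAt ℝ (deriv f) u :=
    (hf'.contDiffAt (hIopen.mem_nhds hu)).differentiableAt (by simp)
  have hg2a : DifferentiableAt ℝ (deriv g) u :=
    (hg'.contDiffAt (hIopen.mem_nhds hu)).differentiableAt (by simp)
  have hφ2a : DifferentiableAt ℝ (deriv φ) v :=
    (hφ'.contDiffAt (hJopen.mem_nhds hv)).differentiableAt (by simp)
  -- positivity facts
  have hf1 : 0 < deriv f u := hfd u hu
  have hg1 : deriv g u < 0 := hgd u hu
  have hf0 : 0 < f u := hfpos u hu
  have hq : 0 < (deriv φ v) ^ 2 + (φ v) ^ 2 := hφpos v hv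
  have hD : 0 < -2 * deriv f u * deriv g u := by nlinarith
  have hcs : Real.sin v ^ 2 + Real.cos v ^ 2 = 1 := Real.sin_sq_add_cos_sq v
  have hc2 : Real.cos v ^ 2 = 1 - Real.sin v ^ 2 := by linarith
  have hrpos : 0 < -(deriv f u) / (2 * deriv g u) := by
    rw [show -(deriv f u) / (2 * deriv g u) = deriv f u / (-(2 * deriv g u)) by ring]
    exact div_pos hf1 (by linarith)
  have hr2 : Real.sqrt (-(deriv f u) / (2 * deriv g u)) ^ 2 = -(deriv f u) / (2 * deriv g u) :=
    Real.sq_sqrt hrpos.le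
  have hQ2 : Real.sqrt ((deriv φ v) ^ 2 + (φ v) ^ 2) ^ 2 = (deriv φ v) ^ 2 + (φ v) ^ 2 :=
    Real.sq_sqrt hq.le
  have hQne : Real.sqrt ((deriv φ v) ^ 2 + (φ v) ^ 2) ≠ 0 := by positivity
  -- vector formulas
  have hzu : zu f g φ u v = z (deriv f) (deriv g) φ u v := zu_eq f g φ u v (hfa u hu) (hga u hu)
  have hzv := zv_eq f g φ u v (hφa v hv)
  have hzuu : zuu f g φ u v = z (deriv (deriv f)) (deriv (deriv g)) φ u v := by
    have hev : (fun t => zu f g φ t v) =ᶠ[nhds u] (fun t => z (deriv f) (deriv g) φ t v) := by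
      filter_upwards [hIopen.mem_nhds hu] with t ht
      exact zu_eq f g φ t v (hfa t ht) (hga t ht)
    calc zuu f g φ u v = deriv (fun t => zu f g φ t v) u := rfl
      _ = deriv (fun t => z (deriv f) (deriv g) φ t v) u := hev.deriv_eq
      _ = _ := (z_hasDerivAt_u (deriv f) (deriv g) φ u v hf2a hg2a).deriv
  have hzuv : zuv f g φ u v =
      (deriv f u * (deriv φ v * Real.cos v - φ v * Real.sin v)) • e1 +
      (deriv f u * (deriv φ v * Real.sin v + φ v * Real.cos v)) • e2 +
      (deriv f u * (φ v * deriv φ v)) • xi1 + (0 : ℝ) • xi2 := by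
    have hfun : (fun t => zu f g φ u t) = fun t => z (deriv f) (deriv g) φ u t :=
      funext fun t => zu_eq f g φ u t (hfa u hu) (hga u hu)
    calc zuv f g φ u v = deriv (fun t => zu f g φ u t) v := rfl
      _ = deriv (fun t => z (deriv f) (deriv g) φ u t) v := by rw [hfun]
      _ = _ := zv_eq (deriv f) (deriv g) φ u v (hφa v hv)
  have hzvv := zvv_formula f g φ J hJopen u v hv hφa hφ2a
  -- second fundamental form coefficients
  have hc111 : mink (zuu f g φ u v) (n1 φ v) = 0 := by
    rw [hzuu, n1_eq]; simp only [z]; rw [mink_combo]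
    ring_nf
    try simp only [hc2]
    try ring
  have hc112 : mink (zuu f g φ u v) (n2 f g φ u v) =
      Real.sqrt (-(deriv f u) / (2 * deriv g u)) *
        ((deriv (deriv f) u * deriv g u - deriv f u * deriv (deriv g) u) / deriv f u) := by
    rw [hzuu, n2_eq]; simp only [z]; rw [mink_combo]
    field_simp
    ring_nf
    try simp only [hc2]
    try ring
  have hc121 : mink (zuv f g φ u v) (n1 φ v) = 0 := by
    rw [hzuv, n1_eq, mink_combo]
    ring_nf
    try simp only [hc2]
    try ring
  have hc122 : mink (zuv f g φ u v) (n2 f g φ u v) = 0 := by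
    rw [hzuv, n2_eq, mink_combo]
    field_simp
    ring_nf
    try simp only [hc2]
    try ring
  have hc221 : mink (zvv f g φ u v) (n1 φ v) =
      f u * (φ v * deriv (deriv φ) v - 2 * (deriv φ v) ^ 2 - (φ v) ^ 2) *
        (Real.sqrt ((deriv φ v) ^ 2 + (φ v) ^ 2))⁻¹ := by
    rw [hzvv, n1_eq, mink_combo]
    ring_nf
    try simp only [hc2]
    try ring
  have hc222 : mink (zvv f g φ u v) (n2 f g φ u v) =
      -(Real.sqrt (-(deriv f u) / (2 * deriv g u)) * f u * ((deriv φ v) ^ 2 + (φ v) ^ 2)) := by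
    rw [hzvv, n2_eq, mink_combo]
    field_simp
    ring_nf
    try simp only [hc2]
    try ring
  -- first fundamental form
  have hE : Ecoef f g φ u v = -2 * deriv f u * deriv g u := by
    simp only [Ecoef]; rw [hzu]; simp only [z]; rw [mink_combo]
    ring_nf
    try simp only [hc2]
    try ring
  have hF : Fcoef f g φ u v = 0 := by
    simp only [Fcoef]; rw [hzu, hzv]; simp only [z]; rw [mink_combo]
    ring_nf
    try simp only [hc2]
    try ring
  have hG : Gcoef f g φ u v = f u ^ 2 * ((deriv φ v) ^ 2 + (φ v) ^ 2) := by
    simp only [Gcoef]; rw [hzv, mink_combo]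
    ring_nf
    try simp only [hc2]
    try ring
  have hEG : Ecoef f g φ u v * Gcoef f g φ u v - (Fcoef f g φ u v) ^ 2 =
      (-2 * deriv f u * deriv g u) * (f u ^ 2 * ((deriv φ v) ^ 2 + (φ v) ^ 2)) := by
    rw [hE, hF, hG]; ring
  have hEGpos : 0 < Ecoef f g φ u v * Gcoef f g φ u v - (Fcoef f g φ u v) ^ 2 := by
    rw [hEG]; exact mul_pos hD (mul_pos (pow_pos hf0 2) hq)
  have hW2 : Wcoef f g φ u v ^ 2 =
      (-2 * deriv f u * deriv g u) * (f u ^ 2 * ((deriv φ v) ^ 2 + (φ v) ^ 2)) := by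
    rw [Wcoef, Real.sq_sqrt hEGpos.le, hEG]
  have hWne : Wcoef f g φ u v ≠ 0 := by
    rw [Wcoef]; exact (Real.sqrt_pos.mpr hEGpos).ne'
  -- L and N vanish
  have hL : Lcoef f g φ u v = 0 := by
    simp only [Lcoef]; rw [hc111, hc112, hc121, hc122]; ring
  have hN : Ncoef f g φ u v = 0 := by
    simp only [Ncoef]; rw [hc121, hc122, hc221, hc222]; ring
  -- M squared
  have hA2 : ((-2 * deriv f u * deriv g u) ^ ((3 : ℝ) / 2)) ^ 2 =
      (-2 * deriv f u * deriv g u) ^ 3 := by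
    rw [← Real.rpow_natCast ((-2 * deriv f u * deriv g u) ^ ((3 : ℝ) / 2)) 2,
      ← Real.rpow_mul hD.le]
    norm_num
  have hB2 : (((deriv φ v) ^ 2 + (φ v) ^ 2) ^ ((3 : ℝ) / 2)) ^ 2 =
      ((deriv φ v) ^ 2 + (φ v) ^ 2) ^ 3 := by
    rw [← Real.rpow_natCast (((deriv φ v) ^ 2 + (φ v) ^ 2) ^ ((3 : ℝ) / 2)) 2,
      ← Real.rpow_mul hq.le]
    norm_num
  have hkm2 : kappam f g u ^ 2 =
      (deriv f u * deriv (deriv g) u - deriv g u * deriv (deriv f) u) ^ 2 /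
        (-2 * deriv f u * deriv g u) ^ 3 := by
    simp only [kappam]; rw [div_pow, hA2]
  have hkb2 : kappabar φ v ^ 2 =
      (φ v * deriv (deriv φ) v - 2 * (deriv φ v) ^ 2 - (φ v) ^ 2) ^ 2 /
        ((deriv φ v) ^ 2 + (φ v) ^ 2) ^ 3 := by
    simp only [kappabar]; rw [div_pow, hB2]
  have hMval : Mcoef f g φ u v = 1 / Wcoef f g φ u v *
      (0 * (-(Real.sqrt (-(deriv f u) / (2 * deriv g u)) * f u *
          ((deriv φ v) ^ 2 + (φ v) ^ 2))) -
        (Real.sqrt (-(deriv f u) / (2 * deriv g u)) *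
          ((deriv (deriv f) u * deriv g u - deriv f u * deriv (deriv g) u) / deriv f u)) *
        (f u * (φ v * deriv (deriv φ) v - 2 * (deriv φ v) ^ 2 - (φ v) ^ 2) *
          (Real.sqrt ((deriv φ v) ^ 2 + (φ v) ^ 2))⁻¹)) := by
    simp only [Mcoef]; rw [hc111, hc112, hc221, hc222]
  have hM2 : (Mcoef f g φ u v) ^ 2 =
      (kappam f g u) ^ 2 * (kappabar φ v) ^ 2 * (-2 * deriv f u * deriv g u) *
        ((deriv φ v) ^ 2 + (φ v) ^ 2) := by
    rw [hMval]
    exact Msq_lemma (deriv f u) (deriv (deriv f) u) (deriv g u) (deriv (deriv g) u) (f u)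
      (φ v) (deriv φ v) (deriv (deriv φ) v)
      (Real.sqrt (-(deriv f u) / (2 * deriv g u)))
      (Real.sqrt ((deriv φ v) ^ 2 + (φ v) ^ 2))
      (Wcoef f g φ u v) ((-2 * deriv f u * deriv g u) ^ ((3 : ℝ) / 2))
      (((deriv φ v) ^ 2 + (φ v) ^ 2) ^ ((3 : ℝ) / 2))
      (kappam f g u) (kappabar φ v)
      hf1.ne' hg1.ne hf0.ne' hq.ne' hr2 hQ2 hW2 hA2 hB2 rfl rfl
  refine ⟨hL, hN, hM2, ?_, ?_⟩
  · rw [hL, hN, hM2, hEG]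
    rw [div_eq_div_iff (mul_pos hD (mul_pos (pow_pos hf0 2) hq)).ne' (pow_ne_zero 2 hf0.ne')]
    ring
  · rw [hL, hN, hF]
    simp

end
end MeridianParabolic
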